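/- Let X be a finite subset of R^k, H a Hamiltonian cycle on X minimizing the sum of squared edge lengths, t >= 1 an integer, and alpha = sqrt(t/(4(t+1))). Then every point of R^k is contained in at most 2t+1 of the open balls of radius alpha*|e| centered at the midpoints of edges e of H. -/

import Mathlib

open scoped Classical

/-- Cyclic successor on `Fin n`. -/
def nxt {n : ℕ} (i : Fin n) : Fin n := ⟨(i.val + 1) % n, Nat.mod_lt _ i.pos⟩

/-- `f` is a Hamiltonian cycle on the finite set `X`: a cyclic ordering of the points
of `X`, i.e. an injective enumeration of `X` by `Fin X.card`; its edges join `f i`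
and `f (nxt i)`. -/
def IsHamCycle {k : ℕ} (X : Finset (EuclideanSpace ℝ (Fin k)))
    (f : Fin X.card → EuclideanSpace ℝ (Fin k)) : Prop :=
  Function.Injective f ∧ ∀ x, x ∈ X ↔ ∃ i, f i = x

section AuxAlgebra

variable {E : Type*} [NormedAddCommGroup E] [InnerProductSpace ℝ E] {ι : Type*}

lemma alg_pair (a b c d : E)
    (h : ‖a - b‖ ^ 2 + ‖c - d‖ ^ 2 ≤ ‖a - c‖ ^ 2 + ‖b - d‖ ^ 2) :
    ‖a - b + (c - d)‖ ^ 2 ≤ 4 * ‖midpoint ℝ a b - midpoint ℝ c d‖ ^ 2 := by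
  have hm : midpoint ℝ a b - midpoint ℝ c d = ((2:ℝ)⁻¹) • (a - c + (b - d)) := by
    rw [midpoint_eq_smul_add, midpoint_eq_smul_add, ← smul_sub]
    congr 1
    abel
  have hnorm : ‖midpoint ℝ a b - midpoint ℝ c d‖ = 2⁻¹ * ‖a - c + (b - d)‖ := by
    rw [hm, norm_smul]
    norm_num
  have hp1a := norm_add_sq_real (a - c) (b - d)
  have hp1b := norm_sub_sq_real (a - c) (b - d)
  have hp2a := norm_add_sq_real (a - b) (c - d)
  have hp2b := norm_sub_sq_real (a - b) (c - d)
  have heq : a - c - (b - d) = a - b - (c - d) := by abel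
  rw [hnorm]
  have h4 : 4 * (2⁻¹ * ‖a - c + (b - d)‖) ^ 2 = ‖a - c + (b - d)‖ ^ 2 := by ring
  rw [h4]
  rw [heq] at hp1b
  linarith

lemma sum_norm_add_sq (s : Finset ι) (v : ι → E) :
    ∑ p ∈ s, ∑ q ∈ s, ‖v p + v q‖ ^ 2
      = 2 * s.card * (∑ p ∈ s, ‖v p‖ ^ 2) + 2 * ‖∑ p ∈ s, v p‖ ^ 2 := by
  have h1 : ∀ p, ∑ q ∈ s, ‖v p + v q‖ ^ 2
      = s.card * ‖v p‖ ^ 2 + 2 * (inner ℝ (v p) (∑ q ∈ s, v q) : ℝ)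
        + ∑ q ∈ s, ‖v q‖ ^ 2 := by
    intro p
    calc ∑ q ∈ s, ‖v p + v q‖ ^ 2
        = ∑ q ∈ s, (‖v p‖ ^ 2 + 2 * (inner ℝ (v p) (v q) : ℝ) + ‖v q‖ ^ 2) :=
          Finset.sum_congr rfl fun q _ => norm_add_sq_real _ _
      _ = ((∑ _q ∈ s, ‖v p‖ ^ 2) + ∑ q ∈ s, 2 * (inner ℝ (v p) (v q) : ℝ))
            + ∑ q ∈ s, ‖v q‖ ^ 2 := by
          rw [Finset.sum_add_distrib, Finset.sum_add_distrib]
      _ = _ := by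
          rw [Finset.sum_const, nsmul_eq_mul, ← Finset.mul_sum, ← inner_sum]
  calc ∑ p ∈ s, ∑ q ∈ s, ‖v p + v q‖ ^ 2
      = ∑ p ∈ s, ((s.card : ℝ) * ‖v p‖ ^ 2 + 2 * (inner ℝ (v p) (∑ q ∈ s, v q) : ℝ)
          + ∑ q ∈ s, ‖v q‖ ^ 2) := Finset.sum_congr rfl fun p _ => h1 p
    _ = ((∑ p ∈ s, (s.card : ℝ) * ‖v p‖ ^ 2)
          + ∑ p ∈ s, 2 * (inner ℝ (v p) (∑ q ∈ s, v q) : ℝ))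
        + ∑ _p ∈ s, ∑ q ∈ s, ‖v q‖ ^ 2 := by
        rw [Finset.sum_add_distrib, Finset.sum_add_distrib]
    _ = ((s.card : ℝ) * (∑ p ∈ s, ‖v p‖ ^ 2)
          + 2 * (inner ℝ (∑ p ∈ s, v p) (∑ q ∈ s, v q) : ℝ))
        + (s.card : ℝ) * (∑ q ∈ s, ‖v q‖ ^ 2) := by
        rw [← Finset.mul_sum, ← Finset.mul_sum, ← sum_inner, Finset.sum_const, nsmul_eq_mul]
    _ = _ := by
        rw [real_inner_self_eq_norm_sq]
        ring

lemma sum_norm_sub_sq_le (s : Finset ι) (v : ι → E) (x : E) :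
    ∑ p ∈ s, ∑ q ∈ s, ‖v p - v q‖ ^ 2 ≤ 2 * s.card * ∑ p ∈ s, ‖v p - x‖ ^ 2 := by
  have hpt : ∀ p q : ι, ‖v p - v q‖ ^ 2
      = ‖v p - x‖ ^ 2 - 2 * (inner ℝ (v p - x) (v q - x) : ℝ) + ‖v q - x‖ ^ 2 := by
    intro p q
    rw [← sub_sub_sub_cancel_right (v p) (v q) x, norm_sub_sq_real]
  have h1 : ∀ p, ∑ q ∈ s, ‖v p - v q‖ ^ 2
      = s.card * ‖v p - x‖ ^ 2 - 2 * (inner ℝ (v p - x) (∑ q ∈ s, (v q - x)) : ℝ)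
        + ∑ q ∈ s, ‖v q - x‖ ^ 2 := by
    intro p
    calc ∑ q ∈ s, ‖v p - v q‖ ^ 2
        = ∑ q ∈ s, (‖v p - x‖ ^ 2 - 2 * (inner ℝ (v p - x) (v q - x) : ℝ)
            + ‖v q - x‖ ^ 2) := Finset.sum_congr rfl fun q _ => hpt p q
      _ = ((∑ _q ∈ s, ‖v p - x‖ ^ 2) - ∑ q ∈ s, 2 * (inner ℝ (v p - x) (v q - x) : ℝ))
            + ∑ q ∈ s, ‖v q - x‖ ^ 2 := by
          rw [Finset.sum_add_distrib, Finset.sum_sub_distrib]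
      _ = _ := by
          rw [Finset.sum_const, nsmul_eq_mul, ← Finset.mul_sum, ← inner_sum]
  have h2 : ∑ p ∈ s, ∑ q ∈ s, ‖v p - v q‖ ^ 2
      = 2 * s.card * (∑ p ∈ s, ‖v p - x‖ ^ 2) - 2 * ‖∑ p ∈ s, (v p - x)‖ ^ 2 := by
    calc ∑ p ∈ s, ∑ q ∈ s, ‖v p - v q‖ ^ 2
        = ∑ p ∈ s, ((s.card : ℝ) * ‖v p - x‖ ^ 2
            - 2 * (inner ℝ (v p - x) (∑ q ∈ s, (v q - x)) : ℝ)
            + ∑ q ∈ s, ‖v q - x‖ ^ 2) := Finset.sum_congr rfl fun p _ => h1 p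
      _ = ((∑ p ∈ s, (s.card : ℝ) * ‖v p - x‖ ^ 2)
            - ∑ p ∈ s, 2 * (inner ℝ (v p - x) (∑ q ∈ s, (v q - x)) : ℝ))
          + ∑ _p ∈ s, ∑ q ∈ s, ‖v q - x‖ ^ 2 := by
          rw [Finset.sum_add_distrib, Finset.sum_sub_distrib]
      _ = ((s.card : ℝ) * (∑ p ∈ s, ‖v p - x‖ ^ 2)
            - 2 * (inner ℝ (∑ p ∈ s, (v p - x)) (∑ q ∈ s, (v q - x)) : ℝ))
          + (s.card : ℝ) * (∑ q ∈ s, ‖v q - x‖ ^ 2) := by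
          rw [← Finset.mul_sum, ← Finset.mul_sum, ← sum_inner, Finset.sum_const, nsmul_eq_mul]
      _ = _ := by
          rw [real_inner_self_eq_norm_sq]
          ring
  have h3 : (0:ℝ) ≤ 2 * ‖∑ p ∈ s, (v p - x)‖ ^ 2 := by positivity
  linarith

end AuxAlgebra

section Rev

/-- reversal of the segment `(i, j]` of `Fin n`. -/
def revFun (n i j : ℕ) : Fin n → Fin n := fun p =>
  if h : i < p.val ∧ p.val ≤ j ∧ j < n then ⟨i + j + 1 - p.val, by omega⟩ else p

lemma revFun_val (n i j : ℕ) (p : Fin n) :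
    (revFun n i j p).val
      = if i < p.val ∧ p.val ≤ j ∧ j < n then i + j + 1 - p.val else p.val := by
  unfold revFun
  split_ifs with h
  · rfl
  · rfl

lemma revFun_involutive (n i j : ℕ) : Function.Involutive (revFun n i j) := by
  intro p
  apply Fin.ext
  rw [revFun_val, revFun_val]
  split_ifs <;> omega

/-- the reversal as a permutation. -/
def revPerm (n i j : ℕ) : Equiv.Perm (Fin n) := (revFun_involutive n i j).toPerm

lemma revPerm_apply (n i j : ℕ) (p : Fin n) : revPerm n i j p = revFun n i j p := rfl

lemma two_opt_aux {E : Type*} [NormedAddCommGroup E] {n : ℕ} (f : Fin n → E)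
    (i j : ℕ) (hij : i < j) (hjn : j < n) :
    ∑ p : Fin n, ‖f (revPerm n i j p) - f (revPerm n i j (nxt p))‖ ^ 2
      = (∑ p : Fin n, ‖f p - f (nxt p)‖ ^ 2)
        - ‖f ⟨i, by omega⟩ - f (nxt ⟨i, by omega⟩)‖ ^ 2
        - ‖f ⟨j, hjn⟩ - f (nxt ⟨j, hjn⟩)‖ ^ 2
        + ‖f ⟨i, by omega⟩ - f ⟨j, hjn⟩‖ ^ 2
        + ‖f (nxt ⟨i, by omega⟩) - f (nxt ⟨j, hjn⟩)‖ ^ 2 := by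
  have hn : 0 < n := by omega
  have hin : i < n := by omega
  set G : ℕ → E := fun q => f ⟨q % n, Nat.mod_lt _ hn⟩ with hGdef
  set sf : ℕ → ℕ := fun q => if i < q ∧ q ≤ j ∧ j < n then i + j + 1 - q else q with hsf
  set A : ℕ → ℝ := fun q => ‖G (sf q) - G (sf ((q + 1) % n))‖ ^ 2 with hAdef
  set B : ℕ → ℝ := fun q => ‖G q - G (q + 1)‖ ^ 2 with hBdef
  have hslt : ∀ q, q < n → sf q < n := by
    intro q hq
    simp only [hsf]
    split <;> omega
  have hG : ∀ (q : ℕ) (hq : q < n), G q = f ⟨q, hq⟩ := by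
    intro q hq
    simp only [hGdef]
    exact congrArg f (Fin.ext (Nat.mod_eq_of_lt hq))
  have hGmod : ∀ q, G (q % n) = G q := by
    intro q
    simp only [hGdef]
    exact congrArg f (Fin.ext (Nat.mod_eq_of_lt (Nat.mod_lt _ hn)))
  have hval : ∀ p : Fin n, (revPerm n i j p).val = sf p.val := by
    intro p
    rw [revPerm_apply, revFun_val]
  have hb1 : ∀ p : Fin n, f (revPerm n i j p) = G (sf p.val) := by
    intro p
    rw [hG _ (hslt _ p.isLt)]
    exact congrArg f (Fin.ext (hval p))
  have hb2 : ∀ p : Fin n, f (revPerm n i j (nxt p)) = G (sf ((p.val + 1) % n)) :=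
    fun p => hb1 (nxt p)
  have hLHS : ∑ p : Fin n, ‖f (revPerm n i j p) - f (revPerm n i j (nxt p))‖ ^ 2
      = ∑ q ∈ Finset.range n, A q := by
    rw [← Fin.sum_univ_eq_sum_range A n]
    refine Finset.sum_congr rfl fun p _ => ?_
    simp only [hAdef]
    rw [hb1 p, hb2 p]
  have hRHS : ∑ p : Fin n, ‖f p - f (nxt p)‖ ^ 2 = ∑ q ∈ Finset.range n, B q := by
    rw [← Fin.sum_univ_eq_sum_range B n]
    refine Finset.sum_congr rfl fun p _ => ?_
    simp only [hBdef]
    rw [hG p.val p.isLt, ← hGmod (p.val + 1), hG _ (Nat.mod_lt _ hn)]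
    exact congrArg₂ (fun a b => ‖a - b‖ ^ 2) (congrArg f (Fin.eta p p.isLt)).symm
      (congrArg f (Fin.ext rfl))
  have hmodcase : ∀ q : ℕ, q < n → (q + 1) % n = q + 1 ∨ (q + 1) % n = 0 := by
    intro q hq
    rcases Nat.lt_or_ge (q + 1) n with h | h
    · exact Or.inl (Nat.mod_eq_of_lt h)
    · have he : q + 1 = n := by omega
      rw [he, Nat.mod_self]
      exact Or.inr rfl
  have hAeqB : ∀ q ∈ Finset.range n, q ∉ Finset.Icc i j → A q - B q = 0 := by
    intro q hq hq2
    rw [Finset.mem_range] at hq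
    rw [Finset.mem_Icc] at hq2
    have hcase : q < i ∨ j < q := by omega
    have h1 : sf q = q := by
      simp only [hsf]
      rw [if_neg (by omega)]
    have hrr := hmodcase q hq
    have h2 : sf ((q + 1) % n) = (q + 1) % n := by
      simp only [hsf]
      rw [if_neg (by rcases hrr with h | h <;> omega)]
    simp only [hAdef, hBdef]
    rw [h1, h2, hGmod, sub_self]
  have hsub : Finset.Icc i j ⊆ Finset.range n := by
    intro q hq
    rw [Finset.mem_Icc] at hq
    exact Finset.mem_range.mpr (by omega)
  have h1 : ∑ q ∈ Finset.range n, (A q - B q) = ∑ q ∈ Finset.Icc i j, (A q - B q) :=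
    (Finset.sum_subset hsub hAeqB).symm
  have hsplit : ∑ q ∈ Finset.Icc i j, (A q - B q)
      = (A i - B i) + ((A j - B j) + ∑ q ∈ Finset.Ioo i j, (A q - B q)) := by
    rw [← Finset.Ioc_insert_left (le_of_lt hij), Finset.sum_insert Finset.left_notMem_Ioc,
      ← Finset.Ioo_insert_right hij, Finset.sum_insert Finset.right_notMem_Ioo]
  have hmid : ∑ q ∈ Finset.Ioo i j, A q = ∑ q ∈ Finset.Ioo i j, B q := by
    apply Finset.sum_nbij' (i := fun q => i + j - q) (j := fun q => i + j - q)
    · intro q hq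
      rw [Finset.mem_Ioo] at hq ⊢
      omega
    · intro q hq
      rw [Finset.mem_Ioo] at hq ⊢
      omega
    · intro q hq
      rw [Finset.mem_Ioo] at hq
      omega
    · intro q hq
      rw [Finset.mem_Ioo] at hq
      omega
    · intro q hq
      rw [Finset.mem_Ioo] at hq
      simp only [hAdef, hBdef]
      have e1 : sf q = i + j + 1 - q := by
        simp only [hsf]
        rw [if_pos ⟨hq.1, by omega, hjn⟩]
      have e2 : (q + 1) % n = q + 1 := Nat.mod_eq_of_lt (by omega)
      have e3 : sf (q + 1) = i + j - q := by
        simp only [hsf]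
        rw [if_pos ⟨by omega, by omega, hjn⟩]
        omega
      have e4 : i + j - q + 1 = i + j + 1 - q := by omega
      rw [e2, e1, e3, e4, norm_sub_rev]
  have hmid' : ∑ q ∈ Finset.Ioo i j, (A q - B q) = 0 := by
    rw [Finset.sum_sub_distrib, hmid, sub_self]
  have hAi : A i = ‖G i - G j‖ ^ 2 := by
    simp only [hAdef]
    have e1 : sf i = i := by
      simp only [hsf]
      rw [if_neg (by omega)]
    have e2 : (i + 1) % n = i + 1 := Nat.mod_eq_of_lt (by omega)
    have e3 : sf (i + 1) = j := by
      simp only [hsf]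
      rw [if_pos ⟨by omega, by omega, hjn⟩]
      omega
    rw [e2, e1, e3]
  have hAj : A j = ‖G (i + 1) - G (j + 1)‖ ^ 2 := by
    simp only [hAdef]
    have e1 : sf j = i + 1 := by
      simp only [hsf]
      rw [if_pos ⟨hij, le_refl j, hjn⟩]
      omega
    have hrr := hmodcase j hjn
    have e2 : sf ((j + 1) % n) = (j + 1) % n := by
      simp only [hsf]
      rw [if_neg (by rcases hrr with h | h <;> omega)]
    rw [e1, e2, hGmod]
  have e0 : (∑ q ∈ Finset.range n, A q) - ∑ q ∈ Finset.range n, B q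
      = (‖G i - G j‖ ^ 2 - B i) + (‖G (i + 1) - G (j + 1)‖ ^ 2 - B j) := by
    rw [← Finset.sum_sub_distrib, h1, hsplit, hmid', ← hAi, ← hAj]
    ring
  have hGi : G i = f ⟨i, hin⟩ := hG i hin
  have hGj : G j = f ⟨j, hjn⟩ := hG j hjn
  have hGi1 : G (i + 1) = f (nxt ⟨i, hin⟩) := by
    rw [← hGmod (i + 1), hG _ (Nat.mod_lt _ hn)]
    exact congrArg f (Fin.ext rfl)
  have hGj1 : G (j + 1) = f (nxt ⟨j, hjn⟩) := by
    rw [← hGmod (j + 1), hG _ (Nat.mod_lt _ hn)]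
    exact congrArg f (Fin.ext rfl)
  have hBi : B i = ‖f ⟨i, hin⟩ - f (nxt ⟨i, hin⟩)‖ ^ 2 := by
    simp only [hBdef]
    rw [hGi, hGi1]
  have hBj : B j = ‖f ⟨j, hjn⟩ - f (nxt ⟨j, hjn⟩)‖ ^ 2 := by
    simp only [hBdef]
    rw [hGj, hGj1]
  rw [hLHS, hRHS]
  rw [hGi, hGj, hGi1, hGj1] at e0
  rw [hBi, hBj] at e0
  linarith

end Rev

theorem hamCycle_balls_fold (k t : ℕ) (ht : 1 ≤ t)
    (X : Finset (EuclideanSpace ℝ (Fin k)))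
    (f : Fin X.card → EuclideanSpace ℝ (Fin k)) (hf : IsHamCycle X f)
    (hmin : ∀ g : Fin X.card → EuclideanSpace ℝ (Fin k), IsHamCycle X g →
      ∑ i, ‖f i - f (nxt i)‖ ^ 2 ≤ ∑ i, ‖g i - g (nxt i)‖ ^ 2)
    (x : EuclideanSpace ℝ (Fin k)) :
    (Finset.univ.filter fun i => ‖x - midpoint ℝ (f i) (f (nxt i))‖ <
        Real.sqrt (t / (4 * (t + 1))) * ‖f i - f (nxt i)‖).card ≤ 2 * t + 1 := by
  by_contra hcon
  push_neg at hcon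
  set S := (Finset.univ.filter fun i => ‖x - midpoint ℝ (f i) (f (nxt i))‖ <
      Real.sqrt (t / (4 * (t + 1))) * ‖f i - f (nxt i)‖) with hSdef
  have hScard : 2 * t + 2 ≤ S.card := by omega
  have hSne : S.Nonempty := Finset.card_pos.mp (by omega)
  have hc0 : (0:ℝ) ≤ (t : ℝ) / (4 * ((t : ℝ) + 1)) := by positivity
  -- exchange inequality from minimality
  have exch : ∀ σ : Equiv.Perm (Fin X.card),
      ∑ i, ‖f i - f (nxt i)‖ ^ 2 ≤ ∑ i, ‖f (σ i) - f (σ (nxt i))‖ ^ 2 := by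
    intro σ
    have hham : IsHamCycle X (f ∘ σ) := by
      constructor
      · exact hf.1.comp σ.injective
      · intro y
        rw [hf.2 y]
        constructor
        · rintro ⟨i, hi⟩
          exact ⟨σ.symm i, by simp [Function.comp, hi]⟩
        · rintro ⟨i, hi⟩
          exact ⟨σ i, hi⟩
    simpa [Function.comp] using hmin (f ∘ σ) hham
  -- two-opt inequality
  have two_opt : ∀ p q : Fin X.card, p.val < q.val →
      ‖f p - f (nxt p)‖ ^ 2 + ‖f q - f (nxt q)‖ ^ 2
        ≤ ‖f p - f q‖ ^ 2 + ‖f (nxt p) - f (nxt q)‖ ^ 2 := by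
    intro p q hpq
    have h := exch (revPerm X.card p.val q.val)
    rw [two_opt_aux f p.val q.val hpq q.isLt] at h
    simp only [Fin.eta] at h
    linarith
  -- pair bound
  have pair : ∀ p q : Fin X.card, p ≠ q →
      ‖f p - f (nxt p) + (f q - f (nxt q))‖ ^ 2
        ≤ 4 * ‖midpoint ℝ (f p) (f (nxt p)) - midpoint ℝ (f q) (f (nxt q))‖ ^ 2 := by
    intro p q hne
    rcases Nat.lt_or_ge p.val q.val with h | h
    · exact alg_pair _ _ _ _ (two_opt p q h)
    · have h' : q.val < p.val := by
        rcases Nat.lt_or_ge q.val p.val with h2 | h2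
        · exact h2
        · exact absurd (Fin.ext (show p.val = q.val by omega)) hne
      have hqp := alg_pair _ _ _ _ (two_opt q p h')
      calc ‖f p - f (nxt p) + (f q - f (nxt q))‖ ^ 2
          = ‖f q - f (nxt q) + (f p - f (nxt p))‖ ^ 2 := by rw [add_comm]
        _ ≤ 4 * ‖midpoint ℝ (f q) (f (nxt q)) - midpoint ℝ (f p) (f (nxt p))‖ ^ 2 := hqp
        _ = 4 * ‖midpoint ℝ (f p) (f (nxt p)) - midpoint ℝ (f q) (f (nxt q))‖ ^ 2 := by
            rw [norm_sub_rev]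
  set D : Fin X.card → EuclideanSpace ℝ (Fin k) := fun p => f p - f (nxt p) with hD
  set M : Fin X.card → EuclideanSpace ℝ (Fin k) :=
    fun p => midpoint ℝ (f p) (f (nxt p)) with hM
  -- strict per-ball bound
  have F1 : ∀ p ∈ S, ‖M p - x‖ ^ 2 < ((t : ℝ) / (4 * ((t : ℝ) + 1))) * ‖D p‖ ^ 2 := by
    intro p hp
    rw [hSdef, Finset.mem_filter] at hp
    have h1 : ‖x - M p‖ < Real.sqrt ((t : ℝ) / (4 * ((t : ℝ) + 1))) * ‖D p‖ := by
      simpa [hM, hD] using hp.2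
    have h2 : ‖x - M p‖ ^ 2 < (Real.sqrt ((t : ℝ) / (4 * ((t : ℝ) + 1))) * ‖D p‖) ^ 2 :=
      pow_lt_pow_left₀ h1 (norm_nonneg _) (by norm_num)
    rw [mul_pow, Real.sq_sqrt hc0] at h2
    rw [norm_sub_rev (M p) x]
    exact h2
  have hsum1 : ∑ p ∈ S, ‖M p - x‖ ^ 2
      < ((t : ℝ) / (4 * ((t : ℝ) + 1))) * ∑ p ∈ S, ‖D p‖ ^ 2 := by
    rw [Finset.mul_sum]
    exact Finset.sum_lt_sum_of_nonempty hSne F1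
  have hsum2 := sum_norm_add_sq S D
  have hsum3 := sum_norm_sub_sq_le S M x
  have hsum4 : ∑ p ∈ S, ∑ q ∈ S, ‖D p + D q‖ ^ 2
      ≤ 4 * (∑ p ∈ S, ∑ q ∈ S, ‖M p - M q‖ ^ 2) + 4 * ∑ p ∈ S, ‖D p‖ ^ 2 := by
    have hpt : ∀ p ∈ S, ∀ q ∈ S, ‖D p + D q‖ ^ 2
        ≤ 4 * ‖M p - M q‖ ^ 2 + (if p = q then 4 * ‖D p‖ ^ 2 else 0) := by
      intro p _ q _
      by_cases hpq : p = q
      · subst hpq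
        rw [if_pos rfl]
        have hdd : ‖D p + D p‖ ^ 2 = 4 * ‖D p‖ ^ 2 := by
          rw [← two_smul ℝ (D p), norm_smul, Real.norm_two]
          ring
        have hmm : (0:ℝ) ≤ 4 * ‖M p - M p‖ ^ 2 := by positivity
        linarith
      · rw [if_neg hpq]
        have := pair p q hpq
        linarith
    calc ∑ p ∈ S, ∑ q ∈ S, ‖D p + D q‖ ^ 2
        ≤ ∑ p ∈ S, ∑ q ∈ S, (4 * ‖M p - M q‖ ^ 2 + if p = q then 4 * ‖D p‖ ^ 2 else 0) :=
          Finset.sum_le_sum fun p hp => Finset.sum_le_sum fun q hq => hpt p hp q hq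
      _ = (∑ p ∈ S, ∑ q ∈ S, 4 * ‖M p - M q‖ ^ 2)
          + ∑ p ∈ S, ∑ q ∈ S, (if p = q then 4 * ‖D p‖ ^ 2 else 0) := by
          rw [← Finset.sum_add_distrib]
          exact Finset.sum_congr rfl fun p _ => Finset.sum_add_distrib
      _ = 4 * (∑ p ∈ S, ∑ q ∈ S, ‖M p - M q‖ ^ 2) + 4 * ∑ p ∈ S, ‖D p‖ ^ 2 := by
          congr 1
          · rw [Finset.mul_sum]
            exact Finset.sum_congr rfl fun p _ => (Finset.mul_sum _ _ _).symm
          · rw [Finset.mul_sum]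
            refine Finset.sum_congr rfl fun p hp => ?_
            rw [Finset.sum_ite_eq S p (fun _ => 4 * ‖D p‖ ^ 2), if_pos hp]
  -- final numeric contradiction
  set s' : ℝ := (S.card : ℝ) with hs'
  have hs'ge : 2 * (t : ℝ) + 2 ≤ s' := by
    rw [hs']
    exact_mod_cast hScard
  have hT0 : (0:ℝ) ≤ ∑ p ∈ S, ‖D p‖ ^ 2 := Finset.sum_nonneg fun p _ => by positivity
  have hDD : (0:ℝ) ≤ ‖∑ p ∈ S, D p‖ ^ 2 := by positivity
  have hkey : 2 * s' * (∑ p ∈ S, ‖D p‖ ^ 2)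
      ≤ 8 * s' * (∑ p ∈ S, ‖M p - x‖ ^ 2) + 4 * ∑ p ∈ S, ‖D p‖ ^ 2 := by
    have h4 : 4 * (∑ p ∈ S, ∑ q ∈ S, ‖M p - M q‖ ^ 2)
        ≤ 4 * (2 * s' * ∑ p ∈ S, ‖M p - x‖ ^ 2) := by
      have := hsum3
      linarith
    linarith [hsum2, hsum4, hDD]
  have ht1 : (0:ℝ) < (t : ℝ) + 1 := by positivity
  have hs'pos : (0:ℝ) < s' := by linarith
  have hstrict : 8 * s' * (∑ p ∈ S, ‖M p - x‖ ^ 2)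
      < 8 * s' * (((t : ℝ) / (4 * ((t : ℝ) + 1))) * ∑ p ∈ S, ‖D p‖ ^ 2) := by
    apply mul_lt_mul_of_pos_left hsum1
    linarith
  have hcalc : 8 * s' * (((t : ℝ) / (4 * ((t : ℝ) + 1))) * ∑ p ∈ S, ‖D p‖ ^ 2) * ((t:ℝ) + 1)
      = 2 * s' * (t : ℝ) * ∑ p ∈ S, ‖D p‖ ^ 2 := by
    field_simp
    ring
  have e1 : (2 * s' - 4) * (∑ p ∈ S, ‖D p‖ ^ 2)
      ≤ 8 * s' * (∑ p ∈ S, ‖M p - x‖ ^ 2) := by linarith [hkey]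
  have e2 : (2 * s' - 4) * (∑ p ∈ S, ‖D p‖ ^ 2) * ((t:ℝ) + 1)
      ≤ 8 * s' * (∑ p ∈ S, ‖M p - x‖ ^ 2) * ((t:ℝ) + 1) :=
    mul_le_mul_of_nonneg_right e1 ht1.le
  have e4 : 8 * s' * (∑ p ∈ S, ‖M p - x‖ ^ 2) * ((t:ℝ) + 1)
      < 2 * s' * (t : ℝ) * ∑ p ∈ S, ‖D p‖ ^ 2 := by
    calc 8 * s' * (∑ p ∈ S, ‖M p - x‖ ^ 2) * ((t:ℝ) + 1)
        < 8 * s' * (((t : ℝ) / (4 * ((t : ℝ) + 1))) * ∑ p ∈ S, ‖D p‖ ^ 2) * ((t:ℝ) + 1) :=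
          mul_lt_mul_of_pos_right hstrict ht1
      _ = 2 * s' * (t : ℝ) * ∑ p ∈ S, ‖D p‖ ^ 2 := hcalc
  have hge : 2 * s' * (t : ℝ) ≤ (2 * s' - 4) * ((t:ℝ) + 1) := by nlinarith [hs'ge]
  have e5 : 2 * s' * (t : ℝ) * (∑ p ∈ S, ‖D p‖ ^ 2)
      ≤ (2 * s' - 4) * ((t:ℝ) + 1) * (∑ p ∈ S, ‖D p‖ ^ 2) :=
    mul_le_mul_of_nonneg_right hge hT0
  have hring : (2 * s' - 4) * (∑ p ∈ S, ‖D p‖ ^ 2) * ((t:ℝ) + 1)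
      = (2 * s' - 4) * ((t:ℝ) + 1) * (∑ p ∈ S, ‖D p‖ ^ 2) := by ring
  linarith [e2, e4, e5, hring]
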